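/- Let a, b, c > 0 and let y : [0,∞) → ℝ be a nonnegative C² function with a y''(t) + b y'(t) + c y(t) ≤ f(t) for t > 0, where f : [0,∞) → ℝ is nonnegative, C¹, and lim_{t→∞} f(t) = 0. Then lim_{t→∞} y(t) = 0. -/

import Mathlib

open Real Filter MeasureTheory intervalIntegral Set

lemma exp_mul_continuous (l : ℝ) : Continuous (fun s : ℝ => Real.exp (l * s)) :=
  Real.continuous_exp.comp (continuous_const.mul continuous_id)

lemma primitive_hasDerivAt {g : ℝ → ℝ} (hg : Continuous g) (t : ℝ) :
    HasDerivAt (fun u => ∫ s in (0:ℝ)..u, g s) (g t) t :=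
  intervalIntegral.integral_hasDerivAt_right (hg.intervalIntegrable _ _)
    (hg.stronglyMeasurableAtFilter _ _) hg.continuousAt

lemma primitive_continuous {g : ℝ → ℝ} (hg : Continuous g) :
    Continuous (fun u => ∫ s in (0:ℝ)..u, g s) :=
  continuous_iff_continuousAt.mpr fun t => (primitive_hasDerivAt hg t).continuousAt

lemma my_integral_exp_mul (l : ℝ) (hl : l ≠ 0) (T t : ℝ) :
    ∫ s in T..t, Real.exp (l * s) = (Real.exp (l * t) - Real.exp (l * T)) / l := by
  have key : ∀ x ∈ Set.uIcc T t, HasDerivAt (fun s => Real.exp (l * s) / l)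
      (Real.exp (l * x)) x := by
    intro x _
    have h1 : HasDerivAt (fun s : ℝ => l * s) l x := by
      simpa using (hasDerivAt_id x).const_mul l
    have h2 := (h1.exp).div_const l
    simpa [mul_div_cancel_right₀ _ hl] using h2
  rw [intervalIntegral.integral_eq_sub_of_hasDerivAt key
    ((exp_mul_continuous l).intervalIntegrable _ _)]
  ring

lemma exp_decay (k : ℝ) (hk : 0 < k) (c : ℝ) :
    Tendsto (fun t : ℝ => Real.exp (-(k * t)) * c) atTop (nhds 0) := by
  have h1 : Tendsto (fun t : ℝ => k * t) atTop atTop := Tendsto.const_mul_atTop hk tendsto_id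
  have h2 : Tendsto (fun t : ℝ => -(k * t)) atTop atBot := tendsto_neg_atBot_iff.mpr h1
  simpa using (Real.tendsto_exp_atBot.comp h2).mul_const c

lemma gronwall_aux (l : ℝ) (u g : ℝ → ℝ)
    (hu : Differentiable ℝ u) (hg : Continuous g)
    (h : ∀ t > (0:ℝ), deriv u t + l * u t ≤ g t) :
    ∀ t ≥ (0:ℝ), u t ≤ Real.exp (-(l * t)) * (u 0 + ∫ s in (0:ℝ)..t, Real.exp (l * s) * g s) := by
  intro t ht
  set G : ℝ → ℝ := fun s => Real.exp (l * s) * g s with hGdef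
  have hGc : Continuous G := (exp_mul_continuous l).mul hg
  set F : ℝ → ℝ := fun τ => Real.exp (l * τ) * u τ - ∫ s in (0:ℝ)..τ, G s with hFdef
  have key : ∀ x : ℝ, HasDerivAt F (Real.exp (l * x) * (deriv u x + l * u x) - G x) x := by
    intro x
    have h1 : HasDerivAt (fun τ : ℝ => l * τ) l x := by
      simpa using (hasDerivAt_id x).const_mul l
    have h2 : HasDerivAt (fun τ => Real.exp (l * τ) * u τ)
        (Real.exp (l * x) * l * u x + Real.exp (l * x) * deriv u x) x :=
      (h1.exp).mul (hu x).hasDerivAt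
    have h3 := primitive_hasDerivAt hGc x
    have h4 := h2.sub h3
    rw [show Real.exp (l * x) * (deriv u x + l * u x) - G x
        = Real.exp (l * x) * l * u x + Real.exp (l * x) * deriv u x - G x by ring]
    exact h4
  have mono : AntitoneOn F (Set.Ici 0) := by
    apply antitoneOn_of_deriv_nonpos (convex_Ici 0)
    · exact fun x _ => (key x).continuousAt.continuousWithinAt
    · exact fun x _ => ((key x).differentiableAt).differentiableWithinAt
    · intro x hx
      rw [interior_Ici] at hx
      rw [(key x).deriv]
      have hle := h x hx
      have hp := Real.exp_pos (l * x)
      have hGx : G x = Real.exp (l * x) * g x := rfl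
      nlinarith
  have hF0 : F 0 = u 0 := by simp [hFdef]
  have hFt := mono (Set.self_mem_Ici) ht ht
  rw [hF0] at hFt
  have hFt' : Real.exp (l * t) * u t ≤ u 0 + ∫ s in (0:ℝ)..t, G s := by
    have hFteq : F t = Real.exp (l * t) * u t - ∫ s in (0:ℝ)..t, G s := rfl
    linarith [hFteq ▸ hFt]
  calc u t = Real.exp (-(l * t)) * (Real.exp (l * t) * u t) := by
        rw [← mul_assoc, ← Real.exp_add]; simp
    _ ≤ Real.exp (-(l * t)) * (u 0 + ∫ s in (0:ℝ)..t, G s) :=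
        mul_le_mul_of_nonneg_left hFt' (Real.exp_pos _).le

lemma conv_tendsto_zero (l : ℝ) (hl : 0 < l) (g : ℝ → ℝ) (hg : Continuous g)
    (hg0 : Tendsto g atTop (nhds 0)) :
    Tendsto (fun t => Real.exp (-(l * t)) * ∫ s in (0:ℝ)..t, Real.exp (l * s) * g s)
      atTop (nhds 0) := by
  rw [Metric.tendsto_nhds]
  intro ε hε
  have h4 : 0 < ε * l / 4 := by positivity
  obtain ⟨T₁, hT₁⟩ := (Metric.tendsto_atTop.mp hg0) (ε * l / 4) h4
  set T := max T₁ 0 with hTdef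
  have hTnn : (0:ℝ) ≤ T := le_max_right _ _
  set C := |∫ s in (0:ℝ)..T, Real.exp (l * s) * g s| with hCdef
  have hCnn : 0 ≤ C := abs_nonneg _
  obtain ⟨N, hN⟩ := (Metric.tendsto_atTop.mp (exp_decay l hl C)) (ε / 2) (by linarith)
  rw [eventually_atTop]
  refine ⟨max N T, fun t htN => ?_⟩
  have htT : T ≤ t := le_trans (le_max_right N T) htN
  have htN' : N ≤ t := le_trans (le_max_left N T) htN
  have hi1 : IntervalIntegrable (fun s => Real.exp (l * s) * g s) volume 0 T :=
    ((exp_mul_continuous l).mul hg).intervalIntegrable _ _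
  have hi2 : IntervalIntegrable (fun s => Real.exp (l * s) * g s) volume T t :=
    ((exp_mul_continuous l).mul hg).intervalIntegrable _ _
  have hsplit : (∫ s in (0:ℝ)..t, Real.exp (l * s) * g s)
      = (∫ s in (0:ℝ)..T, Real.exp (l * s) * g s) + ∫ s in T..t, Real.exp (l * s) * g s :=
    (intervalIntegral.integral_add_adjacent_intervals hi1 hi2).symm
  set E := Real.exp (-(l * t)) with hEdef
  have hE : 0 < E := Real.exp_pos _
  have hmono : Real.exp (l * T) ≤ Real.exp (l * t) :=
    Real.exp_le_exp.mpr (mul_le_mul_of_nonneg_left htT hl.le)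
  have hbd : |∫ s in T..t, Real.exp (l * s) * g s|
      ≤ ((Real.exp (l * t) - Real.exp (l * T)) / l) * (ε * l / 4) := by
    have hae : ∀ᵐ s ∂(volume.restrict (Set.uIoc T t)),
        ‖Real.exp (l * s) * g s‖ ≤ Real.exp (l * s) * (ε * l / 4) := by
      refine MeasureTheory.ae_restrict_of_forall_mem measurableSet_uIoc fun s hs => ?_
      rw [Set.uIoc_of_le htT] at hs
      have hs1 : T₁ ≤ s := le_trans (le_max_left T₁ 0) hs.1.le
      have hgs := hT₁ s hs1
      rw [Real.dist_eq, sub_zero] at hgs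
      rw [Real.norm_eq_abs, abs_mul, abs_of_pos (Real.exp_pos _)]
      exact mul_le_mul_of_nonneg_left hgs.le (Real.exp_pos _).le
    have hb2 : IntervalIntegrable (fun s => Real.exp (l * s) * (ε * l / 4)) volume T t :=
      ((exp_mul_continuous l).mul continuous_const).intervalIntegrable _ _
    have h5 := intervalIntegral.norm_integral_le_of_norm_le htT
      ((ae_restrict_iff' measurableSet_Ioc).mp (by rwa [Set.uIoc_of_le htT] at hae)) hb2
    rw [Real.norm_eq_abs] at h5
    refine h5.trans ?_
    rw [intervalIntegral.integral_mul_const, my_integral_exp_mul l (ne_of_gt hl)]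
  have hEC : E * C < ε / 2 := by
    have h6 := hN t htN'
    rw [Real.dist_eq, sub_zero, abs_of_nonneg (by positivity)] at h6
    exact h6
  have hEB : E * (((Real.exp (l * t) - Real.exp (l * T)) / l) * (ε * l / 4)) ≤ ε / 4 := by
    have h8 : E * Real.exp (l * t) = 1 := by
      rw [hEdef, ← Real.exp_add]; simp
    have h9 : (0:ℝ) ≤ E * Real.exp (l * T) := by positivity
    have h10 : ((Real.exp (l * t) - Real.exp (l * T)) / l) * (ε * l / 4)
        = (ε / 4) * (Real.exp (l * t) - Real.exp (l * T)) := by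
      field_simp
    rw [h10]
    nlinarith [hε.le]
  rw [Real.dist_eq, sub_zero, hsplit]
  have habs : |E * ((∫ s in (0:ℝ)..T, Real.exp (l * s) * g s)
      + ∫ s in T..t, Real.exp (l * s) * g s)|
      ≤ E * C + E * |∫ s in T..t, Real.exp (l * s) * g s| := by
    rw [abs_mul, abs_of_pos hE, ← mul_add]
    exact mul_le_mul_of_nonneg_left (abs_add_le _ _) hE.le
  have h11 : E * |∫ s in T..t, Real.exp (l * s) * g s|
      ≤ E * (((Real.exp (l * t) - Real.exp (l * T)) / l) * (ε * l / 4)) :=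
    mul_le_mul_of_nonneg_left hbd hE.le
  calc |E * ((∫ s in (0:ℝ)..T, Real.exp (l * s) * g s)
      + ∫ s in T..t, Real.exp (l * s) * g s)|
      ≤ E * C + E * |∫ s in T..t, Real.exp (l * s) * g s| := habs
    _ ≤ E * C + ε / 4 := by linarith
    _ < ε := by linarith

theorem second_order_gronwall_vanishing_forcing (a b c : ℝ)
    (ha : 0 < a) (hb : 0 < b) (hc : 0 < c)
    (y f : ℝ → ℝ) (hy : ContDiff ℝ 2 y) (hynn : ∀ t ≥ (0:ℝ), 0 ≤ y t)
    (hf : ContDiff ℝ 1 f) (hfnn : ∀ t ≥ (0:ℝ), 0 ≤ f t)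
    (hflim : Filter.Tendsto f Filter.atTop (nhds 0))
    (hineq : ∀ t > (0:ℝ), a * deriv (deriv y) t + b * deriv y t + c * y t ≤ f t) :
    Filter.Tendsto y Filter.atTop (nhds 0) := by
  -- regularity of y
  rw [show (2 : WithTop ℕ∞) = 1 + 1 by norm_num] at hy
  obtain ⟨hydiff, -, hy1⟩ := contDiff_succ_iff_deriv.mp hy
  obtain ⟨hy'diff, hy''cont⟩ := contDiff_one_iff_deriv.mp hy1
  have hfc : Continuous f := hf.continuous
  -- choice of rates
  set lam : ℝ := min (b / (2 * a)) (c / b) with hlamdef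
  have hlam : 0 < lam := lt_min (by positivity) (by positivity)
  have hlam1 : a * lam ≤ b / 2 := by
    have := min_le_left (b / (2 * a)) (c / b)
    rw [hlamdef]
    calc a * min (b / (2 * a)) (c / b) ≤ a * (b / (2 * a)) :=
          mul_le_mul_of_nonneg_left (min_le_left _ _) ha.le
      _ = b / 2 := by field_simp
  have hlam2 : b * lam ≤ c := by
    calc b * lam ≤ b * (c / b) := mul_le_mul_of_nonneg_left (min_le_right _ _) hb.le
      _ = c := by field_simp
  set mu : ℝ := b / a - lam with hmudef
  have hmu : 0 < mu := by
    rw [hmudef]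
    have h1 : lam < b / a := by
      have : a * lam < b := lt_of_le_of_lt hlam1 (by linarith)
      rw [lt_div_iff₀ ha]
      linarith [this]
    linarith
  have hamu : a * mu = b - a * lam := by
    rw [hmudef]; field_simp
  -- the function w
  set w : ℝ → ℝ := fun t => deriv y t + lam * y t with hwdef
  have hwdiff : Differentiable ℝ w := hy'diff.add (hydiff.const_mul lam)
  have hwcont : Continuous w := hwdiff.continuous
  have hwderiv : ∀ t, deriv w t = deriv (deriv y) t + lam * deriv y t := by
    intro t
    exact (((hy'diff t).hasDerivAt).add (((hydiff t).hasDerivAt).const_mul lam)).deriv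
  -- first-order inequality for w
  have hwineq : ∀ t > (0:ℝ), deriv w t + mu * w t ≤ f t / a := by
    intro t ht
    rw [hwderiv t, le_div_iff₀ ha, hwdef]
    have h1 := hineq t ht
    have h2 := hynn t ht.le
    have h3 : (0:ℝ) ≤ (c - b * lam) * y t := mul_nonneg (by linarith) h2
    have h4 : (0:ℝ) ≤ (a * lam * lam) * y t :=
      mul_nonneg (mul_nonneg (mul_nonneg ha.le hlam.le) hlam.le) h2
    have hexpand : (deriv (deriv y) t + lam * deriv y t
        + mu * (deriv y t + lam * y t)) * a
        = a * deriv (deriv y) t + (a * lam + a * mu) * deriv y t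
          + (a * mu) * lam * y t := by ring
    rw [hexpand, hamu]
    nlinarith
  -- Gronwall for w
  have hwbound := gronwall_aux mu w (fun t => f t / a) hwdiff (hfc.div_const a) hwineq
  -- the dominating function G
  set G : ℝ → ℝ := fun t =>
    Real.exp (-(mu * t)) * (w 0 + ∫ s in (0:ℝ)..t, Real.exp (mu * s) * (f s / a)) with hGdef
  have hGcont : Continuous G := by
    apply Continuous.mul
    · exact Real.continuous_exp.comp (continuous_const.mul continuous_id).neg
    · exact continuous_const.add
        (primitive_continuous ((exp_mul_continuous mu).mul (hfc.div_const a)))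
  have hGlim : Tendsto G atTop (nhds 0) := by
    have h1 := exp_decay mu hmu (w 0)
    have h2 := conv_tendsto_zero mu hmu (fun s => f s / a) (hfc.div_const a)
      (by simpa using hflim.div_const a)
    have h3 := h1.add h2
    rw [add_zero] at h3
    refine h3.congr fun t => ?_
    simp only [hGdef, hwdef]
    ring
  -- Gronwall for y against w
  have hybound := gronwall_aux lam y w hydiff hwcont (fun t _ => le_of_eq rfl)
  -- comparison of integrals
  have hfinal : ∀ t ≥ (0:ℝ), y t ≤ Real.exp (-(lam * t)) * y 0
      + Real.exp (-(lam * t)) * ∫ s in (0:ℝ)..t, Real.exp (lam * s) * G s := by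
    intro t ht
    have hint : (∫ s in (0:ℝ)..t, Real.exp (lam * s) * w s)
        ≤ ∫ s in (0:ℝ)..t, Real.exp (lam * s) * G s := by
      apply intervalIntegral.integral_mono_on ht
        (((exp_mul_continuous lam).mul hwcont).intervalIntegrable _ _)
        (((exp_mul_continuous lam).mul hGcont).intervalIntegrable _ _)
      intro s hs
      exact mul_le_mul_of_nonneg_left (hwbound s hs.1) (Real.exp_pos _).le
    have h5 := hybound t ht
    have hEpos := (Real.exp_pos (-(lam * t))).le
    calc y t ≤ Real.exp (-(lam * t)) * (y 0 + ∫ s in (0:ℝ)..t, Real.exp (lam * s) * w s) := h5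
      _ ≤ Real.exp (-(lam * t)) * (y 0 + ∫ s in (0:ℝ)..t, Real.exp (lam * s) * G s) := by
          apply mul_le_mul_of_nonneg_left _ hEpos
          linarith
      _ = Real.exp (-(lam * t)) * y 0
          + Real.exp (-(lam * t)) * ∫ s in (0:ℝ)..t, Real.exp (lam * s) * G s := by ring
  -- squeeze
  have hBlim : Tendsto (fun t => Real.exp (-(lam * t)) * y 0
      + Real.exp (-(lam * t)) * ∫ s in (0:ℝ)..t, Real.exp (lam * s) * G s)
      atTop (nhds 0) := by
    have h1 := exp_decay lam hlam (y 0)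
    have h2 := conv_tendsto_zero lam hlam G hGcont hGlim
    simpa using h1.add h2
  apply squeeze_zero' ?_ ?_ hBlim
  · filter_upwards [eventually_ge_atTop (0:ℝ)] with t ht
    exact hynn t ht
  · filter_upwards [eventually_ge_atTop (0:ℝ)] with t ht
    exact hfinal t ht
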